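/- Let K = { u ∈ L¹([0,1]) : 0 ≤ u ≤ 1 a.e. } and define T : K → K by (Tu)(t) = (u(t)/2)·∫₀ᵗ u(s) ds. Then for every n ∈ ℕ, every sequence (u_i) in K, every v ∈ K, every i, and every A ⊆ {1,…,n}: ‖∑_{k∈A} (T u_{i+k} − T v)‖₁ ≤ max_{C ⊆ {1,…,n}} ‖∑_{k∈C} (u_{i+k} − v)‖₁. In particular T is 𝔠𝔪-nonexpansive. -/

import Mathlib

open Filter MeasureTheory

/-- The `L¹`-norm on `[0,1]` of a function. -/
noncomputable def L1norm (f : ℝ → ℝ) : ℝ :=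
  ∫ t in Set.Icc (0 : ℝ) 1, |f t|

/-- The map `T u (t) = (u t / 2) · ∫₀ᵗ u`. -/
noncomputable def Tint (u : ℝ → ℝ) (t : ℝ) : ℝ :=
  u t / 2 * ∫ s in (0 : ℝ)..t, u s

/-- Supremum over all subsets `C ⊆ {1,…,n}` of the `L¹`-norm of the partial
sum. -/
noncomputable def supSubsetsL1 (n : ℕ) (g : ℕ → ℝ → ℝ) : ℝ :=
  ((Finset.Icc 1 n).powerset).sup' (Finset.powerset_nonempty _)
    (fun C => L1norm (fun t => ∑ k ∈ C, g k t))

/-! ### Auxiliary material -/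

/-- Lebesgue measure restricted to `[0,1]`. -/
noncomputable def μ01 : Measure ℝ := volume.restrict (Set.Icc 0 1)

instance : IsFiniteMeasure μ01 := by unfold μ01; infer_instance

lemma L1norm_eq (f : ℝ → ℝ) : L1norm f = ∫ t, |f t| ∂μ01 := rfl

lemma mu01_univ_toReal : (μ01 Set.univ).toReal = 1 := by
  simp [μ01, Measure.restrict_apply_univ, Real.volume_Icc]

lemma integral_const_mu01 (c : ℝ) : ∫ _t, c ∂μ01 = c := by
  rw [MeasureTheory.integral_const, measureReal_def, mu01_univ_toReal, one_smul]

lemma integrable_of_ae_bound {f : ℝ → ℝ} (hm : AEStronglyMeasurable f μ01) {c : ℝ}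
    (h : ∀ᵐ t ∂μ01, |f t| ≤ c) : Integrable f μ01 :=
  (integrable_const c).mono' hm (h.mono fun t ht => by
    simpa [Real.norm_eq_abs] using ht)

lemma integral_abs_le_of_ae {f : ℝ → ℝ} (hm : AEStronglyMeasurable f μ01) {c : ℝ}
    (h : ∀ᵐ t ∂μ01, |f t| ≤ c) : ∫ t, |f t| ∂μ01 ≤ c := by
  have hi := integrable_of_ae_bound hm h
  calc ∫ t, |f t| ∂μ01 ≤ ∫ _t, c ∂μ01 := integral_mono_ae hi.abs (integrable_const c) h
    _ = c := integral_const_mu01 c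

lemma intervalIntegrable_of_mu01 {f : ℝ → ℝ} (hf : Integrable f μ01) {t : ℝ}
    (ht : t ∈ Set.Icc (0:ℝ) 1) : IntervalIntegrable f volume 0 t := by
  apply IntegrableOn.intervalIntegrable
  rw [Set.uIcc_of_le ht.1]
  exact (show IntegrableOn f (Set.Icc 0 1) volume from hf).mono_set
    (Set.Icc_subset_Icc_right ht.2)

lemma abs_primitive_le {f : ℝ → ℝ} (hf : Integrable f μ01) {t : ℝ}
    (ht : t ∈ Set.Icc (0:ℝ) 1) :
    |∫ s in (0:ℝ)..t, f s| ≤ ∫ s, |f s| ∂μ01 := by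
  rw [intervalIntegral.integral_of_le ht.1]
  calc |∫ s in Set.Ioc 0 t, f s|
      ≤ ∫ s in Set.Ioc 0 t, |f s| := by
        simpa [Real.norm_eq_abs] using
          norm_integral_le_integral_norm (μ := volume.restrict (Set.Ioc 0 t)) f
    _ ≤ ∫ s in Set.Icc 0 1, |f s| := by
        refine setIntegral_mono_set (show IntegrableOn (fun s => |f s|) (Set.Icc 0 1) volume
          from hf.abs) (ae_of_all _ fun s => abs_nonneg _) ?_
        exact HasSubset.Subset.eventuallyLE
          (Set.Ioc_subset_Icc_self.trans (Set.Icc_subset_Icc_right ht.2))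
    _ = ∫ s, |f s| ∂μ01 := rfl

lemma continuousOn_primitive_mu01 {f : ℝ → ℝ} (hf : Integrable f μ01) :
    ContinuousOn (fun t => ∫ s in (0:ℝ)..t, f s) (Set.Icc 0 1) := by
  have h : IntegrableOn f (Set.uIcc (0:ℝ) 1) volume := by
    rw [Set.uIcc_of_le zero_le_one]; exact hf
  have := intervalIntegral.continuousOn_primitive_interval (μ := volume) h
  rwa [Set.uIcc_of_le zero_le_one] at this

lemma aemeasurable_primitive_mu01 {f : ℝ → ℝ} (hf : Integrable f μ01) :
    AEMeasurable (fun t => ∫ s in (0:ℝ)..t, f s) μ01 :=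
  (continuousOn_primitive_mu01 hf).aemeasurable measurableSet_Icc

/-- Key convexity lemma: the `L¹`-norm of a `[0,1]`-convex combination of the `a k`'s
(plus a fixed function `b`) is bounded by the maximum over subsets. -/
lemma key_lemma {ι : Type*} [DecidableEq ι] (μ : Measure ℝ) (a : ι → ℝ → ℝ)
    (ha : ∀ k, Integrable (a k) μ) (A : Finset ι) (d : ι → ℝ)
    (hd : ∀ k ∈ A, d k ∈ Set.Icc (0:ℝ) 1) (X : ℝ)
    (b : ℝ → ℝ) (hb : Integrable b μ)
    (hX : ∀ C ⊆ A, ∫ t, |b t + ∑ k ∈ C, a k t| ∂μ ≤ X) :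
    ∫ t, |b t + ∑ k ∈ A, d k * a k t| ∂μ ≤ X := by
  induction A using Finset.induction_on generalizing b with
  | empty => simpa using hX ∅ (by simp)
  | @insert k A' hk IH =>
    have hdk := hd k (Finset.mem_insert_self k A')
    have hR : Integrable (fun t => ∑ j ∈ A', d j * a j t) μ :=
      integrable_finset_sum _ (fun j _ => (ha j).const_mul (d j))
    have h1 : Integrable (fun t => |(b t + a k t) + ∑ j ∈ A', d j * a j t|) μ :=
      (((hb.add (ha k)).add hR).abs)
    have h2 : Integrable (fun t => |b t + ∑ j ∈ A', d j * a j t|) μ :=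
      ((hb.add hR).abs)
    have hpt : ∀ t, |b t + ∑ j ∈ insert k A', d j * a j t| ≤
        d k * |(b t + a k t) + ∑ j ∈ A', d j * a j t| +
        (1 - d k) * |b t + ∑ j ∈ A', d j * a j t| := by
      intro t
      rw [Finset.sum_insert hk]
      have : b t + (d k * a k t + ∑ j ∈ A', d j * a j t) =
          d k * ((b t + a k t) + ∑ j ∈ A', d j * a j t) +
          (1 - d k) * (b t + ∑ j ∈ A', d j * a j t) := by ring
      rw [this]
      calc |_| ≤ |d k * ((b t + a k t) + ∑ j ∈ A', d j * a j t)| +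
          |(1 - d k) * (b t + ∑ j ∈ A', d j * a j t)| := abs_add_le _ _
        _ = _ := by
          rw [abs_mul, abs_mul, abs_of_nonneg hdk.1, abs_of_nonneg (sub_nonneg.mpr hdk.2)]
    calc ∫ t, |b t + ∑ j ∈ insert k A', d j * a j t| ∂μ
        ≤ ∫ t, (d k * |(b t + a k t) + ∑ j ∈ A', d j * a j t| +
            (1 - d k) * |b t + ∑ j ∈ A', d j * a j t|) ∂μ := by
          have hL : Integrable (fun t => |b t + ∑ j ∈ insert k A', d j * a j t|) μ :=
            ((hb.add (integrable_finset_sum _ (fun j _ => (ha j).const_mul (d j)))).abs)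
          exact integral_mono hL ((h1.const_mul _).add (h2.const_mul _)) hpt
      _ = d k * ∫ t, |(b t + a k t) + ∑ j ∈ A', d j * a j t| ∂μ +
          (1 - d k) * ∫ t, |b t + ∑ j ∈ A', d j * a j t| ∂μ := by
          rw [integral_add (h1.const_mul _) (h2.const_mul _), MeasureTheory.integral_const_mul,
            MeasureTheory.integral_const_mul]
      _ ≤ d k * X + (1 - d k) * X := by
          have e1 : ∫ t, |(b t + a k t) + ∑ j ∈ A', d j * a j t| ∂μ ≤ X := by
            apply IH (fun j hj => hd j (Finset.mem_insert_of_mem hj)) _ (hb.add (ha k))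
            intro C hC
            have h' := hX (insert k C) (Finset.insert_subset_insert k hC)
            calc ∫ t, |b t + a k t + ∑ j ∈ C, a j t| ∂μ
                = ∫ t, |b t + ∑ j ∈ insert k C, a j t| ∂μ := by
                  congr 1; funext t
                  rw [Finset.sum_insert (fun h => hk (hC h))]; ring_nf
              _ ≤ X := h'
          have e2 : ∫ t, |b t + ∑ j ∈ A', d j * a j t| ∂μ ≤ X := by
            apply IH (fun j hj => hd j (Finset.mem_insert_of_mem hj)) _ hb
            intro C hC
            exact hX C (hC.trans (Finset.subset_insert k A'))
          have := hdk.1; have := hdk.2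
          nlinarith
      _ = X := by ring

/-- The main inequality for a fixed finite family. -/
lemma main_ineq (w : ℕ → ℝ → ℝ) (v : ℝ → ℝ)
    (hw : ∀ k, Measurable (w k)) (hv : Measurable v)
    (hwm : ∀ k, ∀ᵐ t ∂μ01, w k t ∈ Set.Icc (0:ℝ) 1)
    (hvm : ∀ᵐ t ∂μ01, v t ∈ Set.Icc (0:ℝ) 1)
    (n : ℕ) (A : Finset ℕ) (hA : A ∈ (Finset.Icc 1 n).powerset) :
    L1norm (fun t => ∑ k ∈ A, (Tint (w k) t - Tint v t)) ≤
      supSubsetsL1 n (fun k t => w k t - v t) := by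
  set M := supSubsetsL1 n (fun k t => w k t - v t) with hMdef
  have hMC : ∀ C ∈ (Finset.Icc 1 n).powerset,
      ∫ t, |∑ k ∈ C, (w k t - v t)| ∂μ01 ≤ M := by
    intro C hC
    exact Finset.le_sup' (fun C => L1norm (fun t => ∑ k ∈ C, (w k t - v t))) hC
  -- basic bounds and integrability
  have habs_w : ∀ k, ∀ᵐ t ∂μ01, |w k t| ≤ 1 := fun k =>
    (hwm k).mono fun t ht => abs_le.mpr ⟨by linarith [ht.1], ht.2⟩
  have habs_v : ∀ᵐ t ∂μ01, |v t| ≤ 1 :=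
    hvm.mono fun t ht => abs_le.mpr ⟨by linarith [ht.1], ht.2⟩
  have hIw : ∀ k, Integrable (w k) μ01 := fun k =>
    integrable_of_ae_bound (hw k).aestronglyMeasurable (habs_w k)
  have hIv : Integrable v μ01 := integrable_of_ae_bound hv.aestronglyMeasurable habs_v
  have hIa : ∀ k, Integrable (fun t => w k t - v t) μ01 := fun k => (hIw k).sub hIv
  have hISA : Integrable (fun t => ∑ k ∈ A, (w k t - v t)) μ01 :=
    integrable_finset_sum _ fun k _ => hIa k
  -- primitives
  set F : ℕ → ℝ → ℝ := fun k t => ∫ s in (0:ℝ)..t, w k s with hFdef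
  set Gv : ℝ → ℝ := fun t => ∫ s in (0:ℝ)..t, v s with hGdef
  set GSA : ℝ → ℝ := fun t => ∫ s in (0:ℝ)..t, ∑ k ∈ A, (w k s - v s) with hGSAdef
  have hF1 : ∀ k, ∀ t ∈ Set.Icc (0:ℝ) 1, |F k t| ≤ 1 := fun k t ht =>
    (abs_primitive_le (hIw k) ht).trans
      (integral_abs_le_of_ae (hw k).aestronglyMeasurable (habs_w k))
  have hSAle : ∫ t, |∑ k ∈ A, (w k t - v t)| ∂μ01 ≤ M := hMC A hA
  -- the two pieces
  set T1 : ℝ → ℝ := fun t => ∑ k ∈ A, (w k t - v t) * F k t with hT1def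
  set T2 : ℝ → ℝ := fun t => v t * GSA t with hT2def
  have hT1meas : AEStronglyMeasurable T1 μ01 := by
    refine (Finset.aemeasurable_fun_sum A fun k _ => ?_).aestronglyMeasurable
    exact (((hw k).sub hv).aemeasurable).mul (aemeasurable_primitive_mu01 (hIw k))
  have hT1bd : ∀ᵐ t ∂μ01, |T1 t| ≤ (A.card : ℝ) := by
    filter_upwards [ae_restrict_mem (measurableSet_Icc), (Filter.eventually_all_finset A).mpr
      (fun k _ => hwm k), hvm] with t ht hwt hvt
    calc |T1 t| ≤ ∑ k ∈ A, |(w k t - v t) * F k t| := Finset.abs_sum_le_sum_abs _ _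
      _ ≤ ∑ k ∈ A, (1:ℝ) := by
          refine Finset.sum_le_sum fun k hk => ?_
          rw [abs_mul]
          have h1 : |w k t - v t| ≤ 1 := by
            have := (hwt k hk).1; have := (hwt k hk).2
            have := hvt.1; have := hvt.2
            rw [abs_le]; constructor <;> linarith
          have h2 := hF1 k t ht
          nlinarith [abs_nonneg (w k t - v t), abs_nonneg (F k t)]
      _ = (A.card : ℝ) := by simp
  have hIT1 : Integrable T1 μ01 := integrable_of_ae_bound hT1meas hT1bd
  have hT2meas : AEStronglyMeasurable T2 μ01 :=
    ((hv.aemeasurable).mul (aemeasurable_primitive_mu01 hISA)).aestronglyMeasurable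
  have hT2bd : ∀ᵐ t ∂μ01, |T2 t| ≤ M := by
    filter_upwards [ae_restrict_mem (measurableSet_Icc), habs_v] with t ht hvt
    have h2 : |GSA t| ≤ M := (abs_primitive_le hISA ht).trans hSAle
    calc |T2 t| = |v t| * |GSA t| := abs_mul _ _
      _ ≤ 1 * M := by
          refine mul_le_mul hvt h2 (abs_nonneg _) zero_le_one
      _ = M := one_mul M
  have hIT2 : Integrable T2 μ01 := integrable_of_ae_bound hT2meas hT2bd
  -- a.e. decomposition
  have heq : ∀ᵐ t ∂μ01, ∑ k ∈ A, (Tint (w k) t - Tint v t)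
      = (1/2) * T1 t + (1/2) * T2 t := by
    filter_upwards [ae_restrict_mem (measurableSet_Icc)] with t ht
    have hsum : GSA t = ∑ k ∈ A, (F k t - Gv t) := by
      rw [hGSAdef]
      simp only
      rw [intervalIntegral.integral_finset_sum
        (fun k _ => intervalIntegrable_of_mu01 (hIa k) ht)]
      exact Finset.sum_congr rfl fun k _ =>
        intervalIntegral.integral_sub (intervalIntegrable_of_mu01 (hIw k) ht)
          (intervalIntegrable_of_mu01 hIv ht)
    calc ∑ k ∈ A, (Tint (w k) t - Tint v t)
        = ∑ k ∈ A, ((1/2) * ((w k t - v t) * F k t) + (1/2) * (v t * (F k t - Gv t))) :=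
          Finset.sum_congr rfl fun k _ => by
            simp only [Tint, hFdef, hGdef]; ring
      _ = (1/2) * T1 t + (1/2) * (v t * ∑ k ∈ A, (F k t - Gv t)) := by
          rw [Finset.sum_add_distrib, ← Finset.mul_sum, ← Finset.mul_sum, ← Finset.mul_sum]
      _ = (1/2) * T1 t + (1/2) * T2 t := by rw [hT2def]; simp only; rw [hsum]
  -- bound on T1 integral via Fubini
  have hT1int : ∫ t, |T1 t| ∂μ01 ≤ M := by
    set g : ℝ → ℝ → ℝ := fun t s => |∑ k ∈ A, w k s * (w k t - v t)| with hgdef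
    have hprod : Integrable (Function.uncurry g) (μ01.prod μ01) := by
      refine Integrable.mono'
        (g := fun p : ℝ × ℝ => ∑ k ∈ A, |w k p.1 - v p.1| * |w k p.2|) ?_ ?_ ?_
      · exact integrable_finset_sum _ fun k _ =>
          Integrable.mul_prod ((hIa k).abs) ((hIw k).abs)
      · refine (Measurable.abs ?_).aestronglyMeasurable
        exact Finset.measurable_sum A fun k _ =>
          ((hw k).comp measurable_snd).mul
            (((hw k).comp measurable_fst).sub (hv.comp measurable_fst))
      · refine ae_of_all _ fun p => ?_
        simp only [Function.uncurry, hgdef, Real.norm_eq_abs, abs_abs]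
        calc |∑ k ∈ A, w k p.2 * (w k p.1 - v p.1)|
            ≤ ∑ k ∈ A, |w k p.2 * (w k p.1 - v p.1)| := Finset.abs_sum_le_sum_abs _ _
          _ = ∑ k ∈ A, |w k p.1 - v p.1| * |w k p.2| := by
              refine Finset.sum_congr rfl fun k _ => ?_
              rw [abs_mul, mul_comm]
    have h_inner_t : ∀ᵐ t ∂μ01, |T1 t| ≤ ∫ s, g t s ∂μ01 := by
      filter_upwards [ae_restrict_mem (measurableSet_Icc)] with t ht
      have hrepr : T1 t = ∫ s in (0:ℝ)..t, ∑ k ∈ A, w k s * (w k t - v t) := by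
        rw [intervalIntegral.integral_finset_sum (fun k _ =>
          (intervalIntegrable_of_mu01 (hIw k) ht).mul_const _)]
        exact Finset.sum_congr rfl fun k _ => by
          rw [intervalIntegral.integral_mul_const, mul_comm]
      rw [hrepr]
      exact abs_primitive_le
        (integrable_finset_sum _ fun k _ => (hIw k).mul_const _) ht
    have h_inner_s : ∀ᵐ s ∂μ01, ∫ t, g t s ∂μ01 ≤ M := by
      filter_upwards [(Filter.eventually_all_finset A).mpr (fun k _ => hwm k)] with s hs
      have := key_lemma μ01 (fun k t => w k t - v t) hIa A (fun k => w k s)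
        (fun k hk => hs k hk) M (fun _ => 0) (integrable_const 0) ?_
      · simpa using this
      · intro C hC
        simp only [zero_add]
        exact hMC C (Finset.mem_powerset.mpr
          ((hC.trans (Finset.mem_powerset.mp hA))))
    calc ∫ t, |T1 t| ∂μ01 ≤ ∫ t, (∫ s, g t s ∂μ01) ∂μ01 :=
          integral_mono_ae hIT1.abs hprod.integral_prod_left h_inner_t
      _ = ∫ s, (∫ t, g t s ∂μ01) ∂μ01 := MeasureTheory.integral_integral_swap hprod
      _ ≤ ∫ _s, M ∂μ01 := by
          refine integral_mono_ae ?_ (integrable_const M) h_inner_s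
          exact hprod.swap.integral_prod_left
      _ = M := integral_const_mu01 M
  -- conclude
  have hT2int : ∫ t, |T2 t| ∂μ01 ≤ M := integral_abs_le_of_ae hT2meas hT2bd
  calc L1norm (fun t => ∑ k ∈ A, (Tint (w k) t - Tint v t))
      = ∫ t, |∑ k ∈ A, (Tint (w k) t - Tint v t)| ∂μ01 := L1norm_eq _
    _ = ∫ t, |(1/2) * T1 t + (1/2) * T2 t| ∂μ01 :=
        integral_congr_ae (heq.mono fun t ht => congrArg abs ht)
    _ ≤ ∫ t, ((1/2) * |T1 t| + (1/2) * |T2 t|) ∂μ01 := by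
        refine integral_mono_ae (((hIT1.const_mul _).add (hIT2.const_mul _)).abs)
          (((hIT1.abs.const_mul _)).add ((hIT2.abs.const_mul _))) (ae_of_all _ fun t => ?_)
        calc |(1/2) * T1 t + (1/2) * T2 t| ≤ |(1/2) * T1 t| + |(1/2) * T2 t| := abs_add_le _ _
          _ = (1/2) * |T1 t| + (1/2) * |T2 t| := by
              rw [abs_mul, abs_mul, abs_of_nonneg (show (0:ℝ) ≤ 1/2 by norm_num)]
    _ = (1/2) * ∫ t, |T1 t| ∂μ01 + (1/2) * ∫ t, |T2 t| ∂μ01 := by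
        rw [integral_add ((hIT1.abs.const_mul _)) ((hIT2.abs.const_mul _)),
          MeasureTheory.integral_const_mul, MeasureTheory.integral_const_mul]
    _ ≤ (1/2) * M + (1/2) * M := by
        have h0 : (0:ℝ) ≤ 1/2 := by norm_num
        exact add_le_add (mul_le_mul_of_nonneg_left hT1int h0)
          (mul_le_mul_of_nonneg_left hT2int h0)
    _ = M := by ring

theorem stmt_9 (u : ℕ → ℝ → ℝ) (v : ℝ → ℝ)
    (hu_meas : ∀ i, Measurable (u i)) (hv_meas : Measurable v)
    (hu_mem : ∀ i, ∀ᵐ t ∂(volume.restrict (Set.Icc (0 : ℝ) 1)),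
      u i t ∈ Set.Icc (0 : ℝ) 1)
    (hv_mem : ∀ᵐ t ∂(volume.restrict (Set.Icc (0 : ℝ) 1)),
      v t ∈ Set.Icc (0 : ℝ) 1) :
    (∀ n : ℕ, ∀ i : ℕ, ∀ A ∈ (Finset.Icc 1 n).powerset,
      L1norm (fun t => ∑ k ∈ A, (Tint (u (i + k)) t - Tint v t)) ≤
        supSubsetsL1 n (fun k t => u (i + k) t - v t)) ∧
    (∀ n : ℕ,
      limsup (fun i => supSubsetsL1 n (fun k t => Tint (u (i + k)) t - Tint v t))
          atTop ≤
        limsup (fun i => supSubsetsL1 n (fun k t => u (i + k) t - v t)) atTop) := by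
  have hu_mem' : ∀ i, ∀ᵐ t ∂μ01, u i t ∈ Set.Icc (0 : ℝ) 1 := fun i => hu_mem i
  have hv_mem' : ∀ᵐ t ∂μ01, v t ∈ Set.Icc (0 : ℝ) 1 := hv_mem
  have part1 : ∀ n : ℕ, ∀ i : ℕ, ∀ A ∈ (Finset.Icc 1 n).powerset,
      L1norm (fun t => ∑ k ∈ A, (Tint (u (i + k)) t - Tint v t)) ≤
        supSubsetsL1 n (fun k t => u (i + k) t - v t) := by
    intro n i A hA
    exact main_ineq (fun k => u (i + k)) v (fun k => hu_meas _) hv_meas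
      (fun k => hu_mem' _) hv_mem' n A hA
  refine ⟨part1, fun n => ?_⟩
  have hle : ∀ i, supSubsetsL1 n (fun k t => Tint (u (i + k)) t - Tint v t) ≤
      supSubsetsL1 n (fun k t => u (i + k) t - v t) := by
    intro i
    exact Finset.sup'_le _ _ fun A hA => part1 n i A hA
  refine Filter.limsup_le_limsup (Filter.Eventually.of_forall hle) ?_ ?_
  · refine Filter.IsBoundedUnder.isCoboundedUnder_le ?_
    refine Filter.isBoundedUnder_of ⟨0, fun i => ?_⟩
    have h0 : L1norm (fun t => ∑ k ∈ (∅ : Finset ℕ),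
        (Tint (u (i + k)) t - Tint v t)) = 0 := by
      simp [L1norm]
    have hs := Finset.le_sup'
      (fun C => L1norm (fun t => ∑ k ∈ C, (Tint (u (i + k)) t - Tint v t)))
      (Finset.empty_mem_powerset (Finset.Icc 1 n))
    exact le_trans (le_of_eq h0.symm) hs
  · refine Filter.isBoundedUnder_of ⟨2 * (n : ℝ), fun i => ?_⟩
    refine Finset.sup'_le _ _ fun C hC => ?_
    have hmeas : AEStronglyMeasurable (fun t => ∑ k ∈ C, (u (i + k) t - v t)) μ01 :=
      (Finset.measurable_sum C fun k _ => (hu_meas (i + k)).sub hv_meas).aestronglyMeasurable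
    have hbd : ∀ᵐ t ∂μ01, |∑ k ∈ C, (u (i + k) t - v t)| ≤ 2 * (n : ℝ) := by
      filter_upwards [(Filter.eventually_all_finset C).mpr (fun k _ => hu_mem' (i + k)),
        hv_mem'] with t htu htv
      have hcard : (C.card : ℝ) ≤ (n : ℝ) := by
        have h := Finset.card_le_card (Finset.mem_powerset.mp hC)
        rw [Nat.card_Icc] at h
        exact_mod_cast (by omega : C.card ≤ n)
      calc |∑ k ∈ C, (u (i + k) t - v t)|
          ≤ ∑ k ∈ C, |u (i + k) t - v t| := Finset.abs_sum_le_sum_abs _ _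
        _ ≤ ∑ _k ∈ C, (2:ℝ) := Finset.sum_le_sum fun k hk => by
              have h1 := (htu k hk).1; have h2 := (htu k hk).2
              have h3 := htv.1; have h4 := htv.2
              rw [abs_le]; constructor <;> linarith
        _ = 2 * (C.card : ℝ) := by rw [Finset.sum_const, nsmul_eq_mul]; ring
        _ ≤ 2 * (n : ℝ) := by linarith
    rw [L1norm_eq]
    exact integral_abs_le_of_ae hmeas hbd
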